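/- Let G be a group and c a left-invariant circular ordering of G. Then c is a secret left-ordering (i.e., c = c_< for some left-ordering < of G) if and only if rot_c(g) = 0 in ℝ/ℤ and τ_c(g,h) = 0 for all g, h ∈ G. -/

import Mathlib

namespace Paper

variable {G : Type*} [Group G]

/-- A left-invariant circular ordering of a group `G`, as a function `G³ → {0, ±1} ⊆ ℤ`. -/
def IsCircOrd (c : G → G → G → ℤ) : Prop :=
  (∀ g₁ g₂ g₃ : G, c g₁ g₂ g₃ = 0 ↔ (g₁ = g₂ ∨ g₁ = g₃ ∨ g₂ = g₃)) ∧
  (∀ g₁ g₂ g₃ : G, c g₁ g₂ g₃ = 0 ∨ c g₁ g₂ g₃ = 1 ∨ c g₁ g₂ g₃ = -1) ∧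
  (∀ g₁ g₂ g₃ g₄ : G, c g₂ g₃ g₄ - c g₁ g₃ g₄ + c g₁ g₂ g₄ - c g₁ g₂ g₃ = 0) ∧
  (∀ g g₁ g₂ g₃ : G, c (g*g₁) (g*g₂) (g*g₃) = c g₁ g₂ g₃)

/-- The space CO(G) of circular orderings, topologized as a subspace of `ℤ^{G³}`
(all relevant values lie in the discrete set `{0,±1}`, and `ℤ` carries the discrete
topology, so this is the subspace topology from the product topology on `{0,±1}^{G³}`). -/
abbrev CircOrd (G : Type*) [Group G] := {c : G → G → G → ℤ // IsCircOrd c}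

open Classical in
/-- The cocycle `f_c`: `f_c(g,h) = 0` if `g = 1` or `h = 1` or `c(1,g,gh) = 1`,
and `f_c(g,h) = 1` otherwise (i.e. when `gh = 1 ≠ g`, or `c(1,gh,g) = 1`). -/
noncomputable def fc (c : G → G → G → ℤ) (g h : G) : ℤ :=
  if g = 1 ∨ h = 1 ∨ c 1 g (g*h) = 1 then 0 else 1

/-- Multiplication in the central extension `G̃_c = G × ℤ`:
`(g,n)(h,m) = (gh, n+m+f_c(g,h))`. -/
noncomputable def liftMul (c : G → G → G → ℤ) (x y : G × ℤ) : G × ℤ :=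
  (x.1 * y.1, x.2 + y.2 + fc c x.1 y.1)

/-- Powers (with natural number exponents) in `G̃_c`. -/
noncomputable def liftPow (c : G → G → G → ℤ) (x : G × ℤ) : ℕ → G × ℤ
  | 0 => (1, 0)
  | n+1 => liftMul c (liftPow c x n) x

/-- `[h]_c`: the unique integer `k` with `z_c^k ≤_c h <_c z_c^{k+1}`, where `<_c` is the
left-ordering of `G̃_c` with positive cone `{(g,n) : n ≥ 0} ∖ {(1,0)}` and `z_c = (1,1)`.
Since `z_c^k = (1,k)` and `f_c(g,g⁻¹) = 1` for `g ≠ 1`, this is exactly the second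
coordinate of `h`. -/
def liftFloor (h : G × ℤ) : ℤ := h.2

/-- The translation number `r̃ot_c(h)` of `h ∈ G̃_c`: the limit of `[hⁿ]_c / n`
(`limUnder` picks out the limit when it exists). -/
noncomputable def rotTilde (c : G → G → G → ℤ) (h : G × ℤ) : ℝ :=
  Filter.limUnder Filter.atTop (fun n : ℕ => (liftFloor (liftPow c h n) : ℝ) / (n : ℝ))

/-- The rotation number `rot_c(g) ∈ ℝ/ℤ`, computed using the lift `(g,0) ∈ G̃_c`
(it is independent of the choice of lift). -/
noncomputable def rotc (c : G → G → G → ℤ) (g : G) : AddCircle (1:ℝ) :=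
  ((rotTilde c (g, 0) : ℝ) : AddCircle (1:ℝ))

/-- `τ_c(g,h) = r̃ot_c(g̃h̃) − r̃ot_c(g̃) − r̃ot_c(h̃)`, computed using the lifts `(g,0)`
and `(h,0)` (it is independent of the choice of lifts). -/
noncomputable def tauc (c : G → G → G → ℤ) (g h : G) : ℝ :=
  rotTilde c (liftMul c (g,0) (h,0)) - rotTilde c (g,0) - rotTilde c (h,0)

/-- A positive cone of a group `G`: `P · P ⊆ P` and `P ∪ P⁻¹ = G ∖ {1}`.
It determines a left-ordering by `g < h` iff `g⁻¹h ∈ P`. -/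
def IsPositiveCone (P : Set G) : Prop :=
  (∀ a ∈ P, ∀ b ∈ P, a * b ∈ P) ∧ (P ∪ P⁻¹ = {g : G | g ≠ 1})

/-- The left-ordering determined by a positive cone. -/
def coneLt (P : Set G) (a b : G) : Prop := a⁻¹ * b ∈ P

open Classical in
/-- The secret left-ordering `c_<` determined by a positive cone `P`:
`c_<(a,b,c) = sign σ` where `σ` is the permutation sorting `(a,b,c)` into increasing
order, i.e. `c_< = 1` on positively cyclically ordered triples, `-1` on negatively
cyclically ordered triples, and `0` when the entries are not all distinct. -/
noncomputable def circOfCone (P : Set G) : G → G → G → ℤ := fun a b c =>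
  if (coneLt P a b ∧ coneLt P b c) ∨ (coneLt P b c ∧ coneLt P c a) ∨
      (coneLt P c a ∧ coneLt P a b) then 1
  else if (coneLt P c b ∧ coneLt P b a) ∨ (coneLt P b a ∧ coneLt P a c) ∨
      (coneLt P a c ∧ coneLt P c b) then -1
  else 0

/-- A circular ordering is a *secret left-ordering* if it is `c_<` for some
left-ordering `<` of `G`. -/
def IsSecret (c : G → G → G → ℤ) : Prop := ∃ P : Set G, IsPositiveCone P ∧ c = circOfCone P


-- basic fc lemmas
lemma fc_cases (c : G → G → G → ℤ) (g h : G) : fc c g h = 0 ∨ fc c g h = 1 := by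
  unfold fc; split <;> simp

lemma fc_one_left (c : G → G → G → ℤ) (h : G) : fc c 1 h = 0 := by
  unfold fc; rw [if_pos (Or.inl rfl)]

lemma fc_one_right (c : G → G → G → ℤ) (g : G) : fc c g 1 = 0 := by
  unfold fc; rw [if_pos (Or.inr (Or.inl rfl))]

lemma fc_inv {c : G → G → G → ℤ} (hc : IsCircOrd c) {g : G} (hg : g ≠ 1) : fc c g g⁻¹ = 1 := by
  unfold fc
  rw [if_neg]
  push_neg
  refine ⟨hg, inv_ne_one.mpr hg, ?_⟩
  rw [mul_inv_cancel]
  have := (hc.1 1 g 1).mpr (Or.inr (Or.inl rfl))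
  omega

lemma fc_cocycle {c : G → G → G → ℤ} (hc : IsCircOrd c) (g h k : G) :
    fc c g h + fc c (g*h) k = fc c g (h*k) + fc c h k := by
  classical
  obtain ⟨h0, hval, hcoc, hinv⟩ := hc
  by_cases hg : g = 1
  · subst hg; simp [fc_one_left, one_mul]
  by_cases hh : h = 1
  · subst hh; simp [fc_one_left, fc_one_right]
  by_cases hk : k = 1
  · subst hk; simp [fc_one_right]
  have key : c 1 h (h*k) - c 1 (g*h) (g*h*k) + c 1 g (g*h*k) - c 1 g (g*h) = 0 := by
    have h1 := hcoc 1 g (g*h) (g*h*k)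
    have h2 := hinv g 1 h (h*k)
    rw [mul_one, ← mul_assoc] at h2
    rw [h2] at h1
    linarith
  have hA := hval 1 g (g*h)
  have hB := hval 1 (g*h) (g*h*k)
  have hC := hval 1 g (g*h*k)
  have hD := hval 1 h (h*k)
  have hA0 : c 1 g (g*h) = 0 ↔ g*h = 1 := by
    rw [h0]
    constructor
    · rintro (e|e|e)
      · exact absurd e.symm hg
      · exact e.symm
      · exact absurd (left_eq_mul.mp e) hh
    · intro e; exact Or.inr (Or.inl e.symm)
  have hB0 : c 1 (g*h) (g*h*k) = 0 ↔ (g*h = 1 ∨ g*h*k = 1) := by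
    rw [h0]
    constructor
    · rintro (e|e|e)
      · exact Or.inl e.symm
      · exact Or.inr e.symm
      · exact absurd (left_eq_mul.mp e) hk
    · rintro (e|e)
      · exact Or.inl e.symm
      · exact Or.inr (Or.inl e.symm)
  have hC0 : c 1 g (g*h*k) = 0 ↔ (h*k = 1 ∨ g*h*k = 1) := by
    rw [h0]
    constructor
    · rintro (e|e|e)
      · exact absurd e.symm hg
      · exact Or.inr e.symm
      · exact Or.inl (by rw [mul_assoc] at e; exact left_eq_mul.mp e)
    · rintro (e|e)
      · exact Or.inr (Or.inr (by rw [mul_assoc, e, mul_one]))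
      · exact Or.inr (Or.inl e.symm)
  have hD0 : c 1 h (h*k) = 0 ↔ h*k = 1 := by
    rw [h0]
    constructor
    · rintro (e|e|e)
      · exact absurd e.symm hh
      · exact e.symm
      · exact absurd (left_eq_mul.mp e) hk
    · intro e; exact Or.inr (Or.inl e.symm)
  rw [show fc c g h = if c 1 g (g*h) = 1 then 0 else 1 from by unfold fc; simp [hg, hh],
      show fc c h k = if c 1 h (h*k) = 1 then 0 else 1 from by unfold fc; simp [hh, hk],
      show fc c (g*h) k = if g*h = 1 ∨ c 1 (g*h) (g*h*k) = 1 then 0 else 1 from by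
        unfold fc; simp [hk],
      show fc c g (h*k) = if h*k = 1 ∨ c 1 g (g*h*k) = 1 then 0 else 1 from by
        unfold fc; simp [hg, ← mul_assoc]]
  by_cases hgh : g*h = 1
  · have hghk : g*h*k ≠ 1 := by rw [hgh, one_mul]; exact hk
    have hA' : c 1 g (g*h) = 0 := hA0.mpr hgh
    have hB' : c 1 (g*h) (g*h*k) = 0 := hB0.mpr (Or.inl hgh)
    rw [if_pos (Or.inl hgh)]
    by_cases hhk : h*k = 1
    · have hD' : c 1 h (h*k) = 0 := hD0.mpr hhk
      rw [if_pos (Or.inl hhk)]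
      split_ifs <;> omega
    · have hC' : c 1 g (g*h*k) ≠ 0 := by
        intro e; rcases hC0.mp e with e|e
        · exact hhk e
        · exact hghk e
      have hD' : c 1 h (h*k) ≠ 0 := fun e => hhk (hD0.mp e)
      simp only [or_iff_right hhk]
      split_ifs <;> omega
  · have hA' : c 1 g (g*h) ≠ 0 := fun e => hgh (hA0.mp e)
    simp only [or_iff_right hgh]
    by_cases hhk : h*k = 1
    · have hghk : g*h*k ≠ 1 := by rw [mul_assoc, hhk, mul_one]; exact hg
      have hB' : c 1 (g*h) (g*h*k) ≠ 0 := by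
        intro e; rcases hB0.mp e with e|e
        · exact hgh e
        · exact hghk e
      have hC' : c 1 g (g*h*k) = 0 := hC0.mpr (Or.inl hhk)
      have hD' : c 1 h (h*k) = 0 := hD0.mpr hhk
      rw [if_pos (Or.inl hhk)]
      split_ifs <;> omega
    · have hD' : c 1 h (h*k) ≠ 0 := fun e => hhk (hD0.mp e)
      simp only [or_iff_right hhk]
      by_cases hghk : g*h*k = 1
      · have hB' : c 1 (g*h) (g*h*k) = 0 := hB0.mpr (Or.inr hghk)
        have hC' : c 1 g (g*h*k) = 0 := hC0.mpr (Or.inr hghk)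
        split_ifs <;> omega
      · have hB' : c 1 (g*h) (g*h*k) ≠ 0 := by
          intro e; rcases hB0.mp e with e|e
          · exact hgh e
          · exact hghk e
        have hC' : c 1 g (g*h*k) ≠ 0 := by
          intro e; rcases hC0.mp e with e|e
          · exact hhk e
          · exact hghk e
        split_ifs <;> omega


open Filter Topology

noncomputable def aseq (c : G → G → G → ℤ) (g : G) (n : ℕ) : ℤ := (liftPow c (g,(0:ℤ)) n).2

lemma liftPow_fst (c : G → G → G → ℤ) (g : G) (m : ℤ) (n : ℕ) :
    (liftPow c (g,m) n).1 = g ^ n := by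
  induction n with
  | zero => simp [liftPow]
  | succ n ih => simp [liftPow, liftMul, ih, pow_succ]

lemma aseq_succ (c : G → G → G → ℤ) (g : G) (n : ℕ) :
    aseq c g (n+1) = aseq c g n + fc c (g^n) g := by
  unfold aseq
  simp [liftPow, liftMul, liftPow_fst]

lemma aseq_nonneg (c : G → G → G → ℤ) (g : G) (n : ℕ) : 0 ≤ aseq c g n := by
  induction n with
  | zero => simp [aseq, liftPow]
  | succ n ih =>
    rw [aseq_succ]
    rcases fc_cases c (g^n) g with e|e <;> omega

lemma aseq_le (c : G → G → G → ℤ) (g : G) (n : ℕ) : aseq c g n ≤ n := by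
  induction n with
  | zero => simp [aseq, liftPow]
  | succ n ih =>
    rw [aseq_succ]
    rcases fc_cases c (g^n) g with e|e <;> push_cast <;> omega

lemma liftPow_snd (c : G → G → G → ℤ) (g : G) (m : ℤ) (n : ℕ) :
    (liftPow c (g,m) n).2 = n * m + aseq c g n := by
  induction n with
  | zero => simp [liftPow, aseq]
  | succ n ih =>
    have h1 : (liftPow c (g,m) (n+1)).2 = (liftPow c (g,m) n).2 + m + fc c (g^n) g := by
      simp [liftPow, liftMul, liftPow_fst]
    rw [h1, ih, aseq_succ]
    push_cast
    ring

lemma liftMul_assoc {c : G → G → G → ℤ} (hc : IsCircOrd c) (x y z : G × ℤ) :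
    liftMul c (liftMul c x y) z = liftMul c x (liftMul c y z) := by
  unfold liftMul
  rw [Prod.mk.injEq]
  constructor
  · simp [mul_assoc]
  · have := fc_cocycle hc x.1 y.1 z.1
    dsimp only
    omega

lemma liftPow_add {c : G → G → G → ℤ} (hc : IsCircOrd c) (x : G × ℤ) (n m : ℕ) :
    liftPow c x (n+m) = liftMul c (liftPow c x n) (liftPow c x m) := by
  induction m with
  | zero =>
    show liftPow c x n = liftMul c (liftPow c x n) (1, 0)
    simp [liftMul, fc_one_right]
  | succ m ih =>
    rw [show n + (m+1) = (n+m)+1 from rfl]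
    show liftMul c (liftPow c x (n+m)) x = liftMul c (liftPow c x n) (liftMul c (liftPow c x m) x)
    rw [ih, liftMul_assoc hc]

lemma aseq_add {c : G → G → G → ℤ} (hc : IsCircOrd c) (g : G) (n m : ℕ) :
    aseq c g (n+m) = aseq c g n + aseq c g m + fc c (g^n) (g^m) := by
  unfold aseq
  rw [liftPow_add hc]
  simp [liftMul, liftPow_fst, aseq]

lemma exists_tendsto {c : G → G → G → ℤ} (hc : IsCircOrd c) (g : G) :
    ∃ L : ℝ, 0 ≤ L ∧ L ≤ 1 ∧
      Tendsto (fun n : ℕ => (aseq c g n : ℝ) / n) atTop (𝓝 L) := by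
  set u : ℕ → ℝ := fun n => (aseq c g n : ℝ) + 1 with hu
  have hsub : Subadditive u := by
    intro n m
    have h1 := aseq_add hc g n m
    have h2 := fc_cases c (g^n) (g^m)
    have h3 : aseq c g (n+m) ≤ aseq c g n + aseq c g m + 1 := by omega
    have h4 : ((aseq c g (n+m) : ℝ)) ≤ (aseq c g n : ℝ) + (aseq c g m : ℝ) + 1 := by
      exact_mod_cast h3
    simp only [hu]
    linarith
  have hpos : ∀ n : ℕ, 0 ≤ u n / n := by
    intro n
    apply div_nonneg
    · simp only [hu]
      have : (0:ℝ) ≤ (aseq c g n : ℝ) := by exact_mod_cast aseq_nonneg c g n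
      linarith
    · positivity
  have hbdd : BddBelow (Set.range fun n : ℕ => u n / n) := by
    refine ⟨0, ?_⟩
    rintro x ⟨n, rfl⟩
    exact hpos n
  have htends := hsub.tendsto_lim hbdd
  have h2 : Tendsto (fun n : ℕ => (aseq c g n : ℝ) / n) atTop (𝓝 (hsub.lim - 0)) := by
    have := htends.sub tendsto_one_div_atTop_nhds_zero_nat
    refine this.congr fun n => ?_
    simp only [hu]
    rw [div_sub_div_same, add_sub_cancel_right]
  rw [sub_zero] at h2
  refine ⟨hsub.lim, ?_, ?_, h2⟩
  · refine ge_of_tendsto' h2 fun n => ?_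
    apply div_nonneg
    · exact_mod_cast aseq_nonneg c g n
    · positivity
  · refine le_of_tendsto h2 ?_
    filter_upwards [eventually_ge_atTop 1] with n hn
    rw [div_le_one (by exact_mod_cast hn : (0:ℝ) < n)]
    exact_mod_cast aseq_le c g n

lemma rotTilde_eq {c : G → G → G → ℤ} {g : G} {L : ℝ}
    (hL : Tendsto (fun n : ℕ => (aseq c g n : ℝ) / n) atTop (𝓝 L)) (m : ℤ) :
    rotTilde c (g, m) = m + L := by
  apply Filter.Tendsto.limUnder_eq
  have h1 : Tendsto (fun n : ℕ => (m : ℝ) + (aseq c g n : ℝ) / n) atTop (𝓝 (m + L)) :=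
    tendsto_const_nhds.add hL
  refine Tendsto.congr' ?_ h1
  filter_upwards [eventually_ne_atTop 0] with n hn
  have hn' : (n : ℝ) ≠ 0 := Nat.cast_ne_zero.mpr hn
  rw [liftFloor, liftPow_snd]
  push_cast
  rw [add_div, mul_comm, mul_div_assoc, div_self hn', mul_one]


section Cone
variable {P : Set G}

lemma cone_one_not_mem (hP : IsPositiveCone P) : (1:G) ∉ P := by
  intro h1
  have : (1:G) ∈ P ∪ P⁻¹ := Or.inl h1
  rw [hP.2] at this
  exact this rfl

lemma cone_not_both (hP : IsPositiveCone P) {g : G} : ¬ (g ∈ P ∧ g⁻¹ ∈ P) := by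
  rintro ⟨h1, h2⟩
  exact cone_one_not_mem hP (by simpa using hP.1 g h1 g⁻¹ h2)

lemma cone_total (hP : IsPositiveCone P) {g : G} (hg : g ≠ 1) : g ∈ P ∨ g⁻¹ ∈ P := by
  have : g ∈ P ∪ P⁻¹ := by rw [hP.2]; exact hg
  simpa [Set.mem_inv] using this

lemma circOfCone_eq_one_iff (P : Set G) (a b e : G) :
    circOfCone P a b e = 1 ↔ ((coneLt P a b ∧ coneLt P b e) ∨ (coneLt P b e ∧ coneLt P e a) ∨
      (coneLt P e a ∧ coneLt P a b)) := by
  unfold circOfCone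
  split_ifs with h1 h2 <;> simp [h1]

lemma coneLt_mul (P : Set G) (x a b : G) : coneLt P (x*a) (x*b) ↔ coneLt P a b := by
  unfold coneLt
  rw [mul_inv_rev, mul_assoc, inv_mul_cancel_left]

open Classical in
lemma circOfCone_mul (P : Set G) (x a b e : G) :
    circOfCone P (x*a) (x*b) (x*e) = circOfCone P a b e := by
  show (if (coneLt P (x*a) (x*b) ∧ coneLt P (x*b) (x*e)) ∨ (coneLt P (x*b) (x*e) ∧ coneLt P (x*e) (x*a)) ∨
      (coneLt P (x*e) (x*a) ∧ coneLt P (x*a) (x*b)) then 1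
    else if (coneLt P (x*e) (x*b) ∧ coneLt P (x*b) (x*a)) ∨ (coneLt P (x*b) (x*a) ∧ coneLt P (x*a) (x*e)) ∨
      (coneLt P (x*a) (x*e) ∧ coneLt P (x*e) (x*b)) then -1
    else 0) = circOfCone P a b e
  rw [coneLt_mul P x a b, coneLt_mul P x b e, coneLt_mul P x e a, coneLt_mul P x e b,
    coneLt_mul P x b a, coneLt_mul P x a e]
  rfl

lemma circOfCone_degen (hone : (1:G) ∉ P)
    (hmul : ∀ a ∈ P, ∀ b ∈ P, a*b ∈ P) {a b e : G} (h : a = b ∨ a = e ∨ b = e) :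
    circOfCone P a b e = 0 := by
  have hirr : ∀ x : G, ¬ coneLt P x x := by
    intro x hx
    unfold coneLt at hx
    rw [inv_mul_cancel] at hx
    exact hone hx
  have hasym : ∀ x y : G, coneLt P x y → ¬ coneLt P y x := by
    intro x y h1 h2
    have h3 := hmul _ h1 _ h2
    rw [mul_assoc, mul_inv_cancel_left, inv_mul_cancel] at h3
    exact hone h3
  have npos : ¬((coneLt P a b ∧ coneLt P b e) ∨ (coneLt P b e ∧ coneLt P e a) ∨
      (coneLt P e a ∧ coneLt P a b)) := by
    rcases h with rfl | rfl | rfl <;> rintro (⟨u,v⟩|⟨u,v⟩|⟨u,v⟩) <;>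
      first | exact hirr _ u | exact hirr _ v | exact hasym _ _ u v
  have nneg : ¬((coneLt P e b ∧ coneLt P b a) ∨ (coneLt P b a ∧ coneLt P a e) ∨
      (coneLt P a e ∧ coneLt P e b)) := by
    rcases h with rfl | rfl | rfl <;> rintro (⟨u,v⟩|⟨u,v⟩|⟨u,v⟩) <;>
      first | exact hirr _ u | exact hirr _ v | exact hasym _ _ u v
  simp only [circOfCone]
  rw [if_neg npos, if_neg nneg]

lemma circOfCone_eq_neg_one {P : Set G} {a b e : G}
    (h1 : ¬((coneLt P a b ∧ coneLt P b e) ∨ (coneLt P b e ∧ coneLt P e a) ∨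
      (coneLt P e a ∧ coneLt P a b)))
    (h2 : (coneLt P e b ∧ coneLt P b a) ∨ (coneLt P b a ∧ coneLt P a e) ∨
      (coneLt P a e ∧ coneLt P e b)) :
    circOfCone P a b e = -1 := by
  simp only [circOfCone]
  rw [if_neg h1, if_pos h2]

open Classical in
lemma fc_circOfCone (hP : IsPositiveCone P) (g h : G) :
    fc (circOfCone P) g h
      = (if g⁻¹ ∈ P then 1 else 0) + (if h⁻¹ ∈ P then 1 else 0)
        - (if (g*h)⁻¹ ∈ P then 1 else 0) := by
  classical
  by_cases hg : g = 1
  · subst hg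
    rw [fc_one_left]
    simp [cone_one_not_mem hP]
  by_cases hh : h = 1
  · subst hh
    rw [fc_one_right]
    simp [cone_one_not_mem hP]
  have e1 : coneLt P 1 g ↔ g ∈ P := by unfold coneLt; rw [inv_one, one_mul]
  have e2 : coneLt P g (g*h) ↔ h ∈ P := by unfold coneLt; rw [inv_mul_cancel_left]
  have e3 : coneLt P (g*h) 1 ↔ (g*h)⁻¹ ∈ P := by unfold coneLt; rw [mul_one]
  rw [show fc (circOfCone P) g h = if circOfCone P 1 g (g*h) = 1 then 0 else 1 from by
    unfold fc; simp [hg, hh]]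
  have hiff : circOfCone P 1 g (g*h) = 1 ↔
      ((g ∈ P ∧ h ∈ P) ∨ (h ∈ P ∧ (g*h)⁻¹ ∈ P) ∨ ((g*h)⁻¹ ∈ P ∧ g ∈ P)) := by
    rw [circOfCone_eq_one_iff, e1, e2, e3]
  rcases cone_total hP hg with hgP | hgP <;> rcases cone_total hP hh with hhP | hhP
  · have hgh : (g*h) ∈ P := hP.1 _ hgP _ hhP
    have n1 : g⁻¹ ∉ P := fun x => cone_not_both hP ⟨hgP, x⟩
    have n2 : h⁻¹ ∉ P := fun x => cone_not_both hP ⟨hhP, x⟩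
    have n3 : (g*h)⁻¹ ∉ P := fun x => cone_not_both hP ⟨hgh, x⟩
    rw [if_pos (hiff.mpr (Or.inl ⟨hgP, hhP⟩)), if_neg n1, if_neg n2, if_neg n3]
    norm_num
  · -- g ∈ P, h⁻¹ ∈ P
    have n1 : g⁻¹ ∉ P := fun x => cone_not_both hP ⟨hgP, x⟩
    have n2 : h ∉ P := fun x => cone_not_both hP ⟨x, hhP⟩
    by_cases hgh1 : g*h = 1
    · have n3 : (g*h)⁻¹ ∉ P := by rw [hgh1, inv_one]; exact cone_one_not_mem hP
      have ncond : ¬((g ∈ P ∧ h ∈ P) ∨ (h ∈ P ∧ (g*h)⁻¹ ∈ P) ∨ ((g*h)⁻¹ ∈ P ∧ g ∈ P)) := by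
        rintro (⟨u,v⟩|⟨u,v⟩|⟨u,v⟩)
        exacts [n2 v, n2 u, n3 u]
      rw [if_neg (fun x => ncond (hiff.mp x)), if_neg n1, if_pos hhP, if_neg n3]
      norm_num
    · rcases cone_total hP hgh1 with hghP | hghP
      · have n3 : (g*h)⁻¹ ∉ P := fun x => cone_not_both hP ⟨hghP, x⟩
        have ncond : ¬((g ∈ P ∧ h ∈ P) ∨ (h ∈ P ∧ (g*h)⁻¹ ∈ P) ∨ ((g*h)⁻¹ ∈ P ∧ g ∈ P)) := by
          rintro (⟨u,v⟩|⟨u,v⟩|⟨u,v⟩)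
          exacts [n2 v, n2 u, n3 u]
        rw [if_neg (fun x => ncond (hiff.mp x)), if_neg n1, if_pos hhP, if_neg n3]
        norm_num
      · rw [if_pos (hiff.mpr (Or.inr (Or.inr ⟨hghP, hgP⟩))), if_neg n1, if_pos hhP, if_pos hghP]
        norm_num
  · -- g⁻¹ ∈ P, h ∈ P
    have n1 : g ∉ P := fun x => cone_not_both hP ⟨x, hgP⟩
    have n2 : h⁻¹ ∉ P := fun x => cone_not_both hP ⟨hhP, x⟩
    by_cases hgh1 : g*h = 1
    · have n3 : (g*h)⁻¹ ∉ P := by rw [hgh1, inv_one]; exact cone_one_not_mem hP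
      have ncond : ¬((g ∈ P ∧ h ∈ P) ∨ (h ∈ P ∧ (g*h)⁻¹ ∈ P) ∨ ((g*h)⁻¹ ∈ P ∧ g ∈ P)) := by
        rintro (⟨u,v⟩|⟨u,v⟩|⟨u,v⟩)
        exacts [n1 u, n3 v, n3 u]
      rw [if_neg (fun x => ncond (hiff.mp x)), if_pos hgP, if_neg n2, if_neg n3]
      norm_num
    · rcases cone_total hP hgh1 with hghP | hghP
      · have n3 : (g*h)⁻¹ ∉ P := fun x => cone_not_both hP ⟨hghP, x⟩
        have ncond : ¬((g ∈ P ∧ h ∈ P) ∨ (h ∈ P ∧ (g*h)⁻¹ ∈ P) ∨ ((g*h)⁻¹ ∈ P ∧ g ∈ P)) := by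
          rintro (⟨u,v⟩|⟨u,v⟩|⟨u,v⟩)
          exacts [n1 u, n3 v, n3 u]
        rw [if_neg (fun x => ncond (hiff.mp x)), if_pos hgP, if_neg n2, if_neg n3]
        norm_num
      · rw [if_pos (hiff.mpr (Or.inr (Or.inl ⟨hhP, hghP⟩))), if_pos hgP, if_neg n2, if_pos hghP]
        norm_num
  · -- g⁻¹ ∈ P, h⁻¹ ∈ P
    have n1 : g ∉ P := fun x => cone_not_both hP ⟨x, hgP⟩
    have n2 : h ∉ P := fun x => cone_not_both hP ⟨x, hhP⟩
    have h3 : (g*h)⁻¹ ∈ P := by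
      rw [mul_inv_rev]
      exact hP.1 _ hhP _ hgP
    have ncond : ¬((g ∈ P ∧ h ∈ P) ∨ (h ∈ P ∧ (g*h)⁻¹ ∈ P) ∨ ((g*h)⁻¹ ∈ P ∧ g ∈ P)) := by
      rintro (⟨u,v⟩|⟨u,v⟩|⟨u,v⟩)
      exacts [n1 u, n2 u, n1 v]
    rw [if_neg (fun x => ncond (hiff.mp x)), if_pos hgP, if_pos hhP, if_pos h3]
    norm_num

end Cone


open Filter Topology in
lemma aseq_of_cobound {c : G → G → G → ℤ} (D : G → ℤ) (hD1 : D 1 = 0)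
    (hf : ∀ g h : G, fc c g h = D g + D h - D (g*h)) (g : G) (n : ℕ) :
    aseq c g n = n * D g - D (g^n) := by
  induction n with
  | zero => simp [aseq, liftPow, hD1]
  | succ n ih =>
    rw [aseq_succ, ih, hf, ← pow_succ]
    push_cast
    ring

open Filter Topology in
lemma tendsto_cobound {c : G → G → G → ℤ} (D : G → ℤ) (hD1 : D 1 = 0)
    (hD01 : ∀ g : G, D g = 0 ∨ D g = 1)
    (hf : ∀ g h : G, fc c g h = D g + D h - D (g*h)) (g : G) :
    Tendsto (fun n : ℕ => (aseq c g n : ℝ) / n) atTop (𝓝 (D g)) := by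
  have h1 : Tendsto (fun n : ℕ => (D (g^n) : ℝ) / n) atTop (𝓝 0) := by
    refine squeeze_zero_norm' ?_ tendsto_one_div_atTop_nhds_zero_nat
    · filter_upwards [eventually_ge_atTop 1] with n hn
      have hn' : (0:ℝ) < n := by exact_mod_cast hn
      rw [norm_div, Real.norm_natCast]
      gcongr
      rcases hD01 (g^n) with e|e <;> rw [e] <;> norm_num
  have h2 : Tendsto (fun n : ℕ => (D g : ℝ) - (D (g^n) : ℝ) / n) atTop (𝓝 ((D g) - 0)) :=
    tendsto_const_nhds.sub h1
  rw [sub_zero] at h2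
  refine Tendsto.congr' ?_ h2
  filter_upwards [eventually_ne_atTop 0] with n hn
  have hn' : (n : ℝ) ≠ 0 := Nat.cast_ne_zero.mpr hn
  rw [aseq_of_cobound D hD1 hf]
  push_cast
  rw [sub_div, mul_comm, mul_div_assoc, div_self hn', mul_one]

set_option maxHeartbeats 1000000 in
lemma circ_eq_of_cobound {c : G → G → G → ℤ} (hc : IsCircOrd c) (D : G → ℤ)
    (hD01 : ∀ g : G, D g = 0 ∨ D g = 1) (hD1 : D 1 = 0)
    (hsum : ∀ g : G, g ≠ 1 → D g + D g⁻¹ = 1)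
    (hf : ∀ g h : G, fc c g h = D g + D h - D (g*h)) :
    IsPositiveCone {g : G | g ≠ 1 ∧ D g = 0} ∧ c = circOfCone {g : G | g ≠ 1 ∧ D g = 0} := by
  classical
  set P : Set G := {g : G | g ≠ 1 ∧ D g = 0} with hPdef
  have hmem : ∀ g : G, g ∈ P ↔ (g ≠ 1 ∧ D g = 0) := fun g => Iff.rfl
  have hPmul : ∀ a ∈ P, ∀ b ∈ P, a * b ∈ P := by
    rintro a ⟨ha1, ha0⟩ b ⟨hb1, hb0⟩
    have hab : a*b ≠ 1 := by
      intro e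
      have hb : b = a⁻¹ := eq_inv_of_mul_eq_one_right e
      have := hsum a ha1
      rw [← hb] at this
      omega
    have h1 := hf a b
    have h2 := fc_cases c a b
    have h3 := hD01 (a*b)
    exact ⟨hab, by omega⟩
  have hPone : (1:G) ∉ P := fun x => x.1 rfl
  have hPcone : IsPositiveCone P := by
    refine ⟨hPmul, ?_⟩
    ext g
    simp only [Set.mem_union, Set.mem_inv, Set.mem_setOf_eq]
    constructor
    · rintro (⟨h1, _⟩ | ⟨h1, _⟩)
      · exact h1
      · exact fun e => h1 (by rw [e, inv_one])
    · intro hg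
      have h1 := hsum g hg
      have h2 := hD01 g
      have h3 := hD01 g⁻¹
      by_cases hD : D g = 0
      · exact Or.inl ⟨hg, hD⟩
      · exact Or.inr ⟨inv_ne_one.mpr hg, by omega⟩
  refine ⟨hPcone, ?_⟩
  have key : ∀ g h : G, c 1 g h = circOfCone P 1 g h := by
    intro g h
    by_cases hg : g = 1
    · rw [hg, (hc.1 1 1 h).mpr (Or.inl rfl),
        circOfCone_degen hPone hPmul (Or.inl rfl)]
    by_cases hh : h = 1
    · rw [hh, (hc.1 1 g 1).mpr (Or.inr (Or.inl rfl)),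
        circOfCone_degen hPone hPmul (Or.inr (Or.inl rfl))]
    by_cases hgh : g = h
    · rw [hgh, (hc.1 1 h h).mpr (Or.inr (Or.inr rfl)),
        circOfCone_degen hPone hPmul (Or.inr (Or.inr rfl))]
    -- distinct case
    have hy1 : g⁻¹*h ≠ 1 := fun e => hgh (inv_mul_eq_one.mp e)
    have hfc := hf g (g⁻¹*h)
    rw [mul_inv_cancel_left] at hfc
    have hfc' : fc c g (g⁻¹*h) = if c 1 g h = 1 then 0 else 1 := by
      unfold fc
      simp [hg, hy1, mul_inv_cancel_left]
    have hx := hD01 g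
    have hy := hD01 (g⁻¹*h)
    have hz := hD01 h
    have hsg := hsum g hg
    have hsh := hsum h hh
    have hsy := hsum _ hy1
    have hzinv := hD01 h⁻¹
    have hginv := hD01 g⁻¹
    have hyinv := hD01 (g⁻¹*h)⁻¹
    have c1 : coneLt P 1 g ↔ D g = 0 := by
      unfold coneLt
      rw [inv_one, one_mul, hmem]
      constructor
      · rintro ⟨_, e⟩; exact e
      · intro e; exact ⟨hg, e⟩
    have c2 : coneLt P g h ↔ D (g⁻¹*h) = 0 := by
      unfold coneLt
      rw [hmem]
      constructor
      · rintro ⟨_, e⟩; exact e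
      · intro e; exact ⟨hy1, e⟩
    have c3 : coneLt P h 1 ↔ D h = 1 := by
      unfold coneLt
      rw [mul_one, hmem]
      constructor
      · rintro ⟨_, e⟩; omega
      · intro e; exact ⟨inv_ne_one.mpr hh, by omega⟩
    have c4 : coneLt P h g ↔ D (g⁻¹*h) = 1 := by
      unfold coneLt
      rw [hmem]
      have e : h⁻¹*g = (g⁻¹*h)⁻¹ := by rw [mul_inv_rev, inv_inv]
      rw [e]
      constructor
      · rintro ⟨_, e2⟩; omega
      · intro e2; exact ⟨inv_ne_one.mpr hy1, by omega⟩
    have c5 : coneLt P g 1 ↔ D g = 1 := by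
      unfold coneLt
      rw [mul_one, hmem]
      constructor
      · rintro ⟨_, e⟩; omega
      · intro e; exact ⟨inv_ne_one.mpr hg, by omega⟩
    have c6 : coneLt P 1 h ↔ D h = 0 := by
      unfold coneLt
      rw [inv_one, one_mul, hmem]
      constructor
      · rintro ⟨_, e⟩; exact e
      · intro e; exact ⟨hh, e⟩
    have hv := hc.2.1 1 g h
    have h0 : c 1 g h ≠ 0 := by
      intro e
      rcases (hc.1 1 g h).mp e with e|e|e
      exacts [hg e.symm, hh e.symm, hgh e]
    have hposiff : ((coneLt P 1 g ∧ coneLt P g h) ∨ (coneLt P g h ∧ coneLt P h 1) ∨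
        (coneLt P h 1 ∧ coneLt P 1 g)) ↔
        ((D g = 0 ∧ D (g⁻¹*h) = 0) ∨ (D (g⁻¹*h) = 0 ∧ D h = 1) ∨ (D h = 1 ∧ D g = 0)) := by
      rw [c1, c2, c3]
    have hnegiff : ((coneLt P h g ∧ coneLt P g 1) ∨ (coneLt P g 1 ∧ coneLt P 1 h) ∨
        (coneLt P 1 h ∧ coneLt P h g)) ↔
        ((D (g⁻¹*h) = 1 ∧ D g = 1) ∨ (D g = 1 ∧ D h = 0) ∨ (D h = 0 ∧ D (g⁻¹*h) = 1)) := by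
      rw [c4, c5, c6]
    by_cases hcv : c 1 g h = 1
    · have harith : (0:ℤ) = D g + D (g⁻¹*h) - D h := by
        rw [← hfc, hfc', if_pos hcv]
      rw [hcv]
      have hPD : (D g = 0 ∧ D (g⁻¹*h) = 0) ∨ (D (g⁻¹*h) = 0 ∧ D h = 1) ∨
          (D h = 1 ∧ D g = 0) := by
        clear * - harith hx hy hz hsg hsh hsy
        omega
      exact ((circOfCone_eq_one_iff P 1 g h).mpr (hposiff.mpr hPD)).symm
    · have hneg : c 1 g h = -1 := by
        rcases hv with v|v|v
        · exact absurd v h0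
        · exact absurd v hcv
        · exact v
      have harith : (1:ℤ) = D g + D (g⁻¹*h) - D h := by
        rw [← hfc, hfc', if_neg hcv]
      rw [hneg]
      have hND : (D (g⁻¹*h) = 1 ∧ D g = 1) ∨ (D g = 1 ∧ D h = 0) ∨
          (D h = 0 ∧ D (g⁻¹*h) = 1) := by
        clear * - harith hx hy hz hsg hsh hsy
        omega
      have hNPD : ¬((D g = 0 ∧ D (g⁻¹*h) = 0) ∨ (D (g⁻¹*h) = 0 ∧ D h = 1) ∨
          (D h = 1 ∧ D g = 0)) := by
        clear * - harith hx hy hz hsg hsh hsy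
        omega
      exact (circOfCone_eq_neg_one (fun x => hNPD (hposiff.mp x))
        (hnegiff.mpr hND)).symm
  funext x y z
  have e1 : c x y z = c 1 (x⁻¹*y) (x⁻¹*z) := by
    have := hc.2.2.2 x 1 (x⁻¹*y) (x⁻¹*z)
    rw [mul_one, mul_inv_cancel_left, mul_inv_cancel_left] at this
    exact this
  have e2 : circOfCone P x y z = circOfCone P 1 (x⁻¹*y) (x⁻¹*z) := by
    have := circOfCone_mul P x 1 (x⁻¹*y) (x⁻¹*z)
    rw [mul_one, mul_inv_cancel_left, mul_inv_cancel_left] at this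
    exact this
  rw [e1, e2, key]


/-- Corollary 4.11: a circular ordering `c` of `G` is a secret left-ordering if and only
if `rot_c(g) = 0` in `ℝ/ℤ` and `τ_c(g,h) = 0` for all `g, h ∈ G`. -/
theorem stmt10 (c : G → G → G → ℤ) (hc : IsCircOrd c) :
    IsSecret c ↔ (∀ g h : G, rotc c g = 0 ∧ tauc c g h = 0) := by
  classical
  constructor
  · rintro ⟨P, hP, rfl⟩
    set D : G → ℤ := fun g => if g⁻¹ ∈ P then 1 else 0 with hD
    have hf : ∀ a b : G, fc (circOfCone P) a b = D a + D b - D (a*b) :=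
      fun a b => fc_circOfCone hP a b
    have hD1 : D 1 = 0 := by
      simp only [hD, inv_one]
      rw [if_neg (cone_one_not_mem hP)]
    have hD01 : ∀ a : G, D a = 0 ∨ D a = 1 := by
      intro a
      simp only [hD]
      split <;> simp
    have htend : ∀ a : G,
        Tendsto (fun n : ℕ => (aseq (circOfCone P) a n : ℝ)/n) atTop (𝓝 (D a)) :=
      fun a => tendsto_cobound D hD1 hD01 hf a
    have hrot : ∀ (a : G) (m : ℤ), rotTilde (circOfCone P) (a, m) = m + D a :=
      fun a m => rotTilde_eq (htend a) m
    intro g h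
    constructor
    · show ((rotTilde (circOfCone P) (g, 0) : ℝ) : AddCircle (1:ℝ)) = 0
      rw [hrot g 0, AddCircle.coe_eq_zero_iff]
      exact ⟨D g, by push_cast; rw [zsmul_eq_mul, mul_one]; ring⟩
    · show rotTilde (circOfCone P) (liftMul (circOfCone P) (g,0) (h,0)) -
        rotTilde (circOfCone P) (g,0) - rotTilde (circOfCone P) (h,0) = 0
      rw [show liftMul (circOfCone P) (g,0) (h,0) = (g*h, fc (circOfCone P) g h) from by
        simp [liftMul]]
      rw [hrot, hrot, hrot, hf]
      push_cast
      ring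
  · intro H
    choose L hL0 hL1 hLt using fun g : G => exists_tendsto hc g
    have hrot : ∀ (g : G) (m : ℤ), rotTilde c (g, m) = m + L g :=
      fun g m => rotTilde_eq (hLt g) m
    have hDex : ∀ g : G, ∃ d : ℤ, (d = 0 ∨ d = 1) ∧ (d:ℝ) = L g := by
      intro g
      have h2 : ((rotTilde c (g, 0) : ℝ) : AddCircle (1:ℝ)) = 0 := (H g g).1
      rw [hrot g 0, AddCircle.coe_eq_zero_iff] at h2
      obtain ⟨n, hn⟩ := h2
      rw [zsmul_eq_mul, mul_one] at hn
      have hn' : (n:ℝ) = L g := by push_cast at hn; linarith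
      refine ⟨n, ?_, hn'⟩
      have e0 : (0:ℝ) ≤ (n:ℝ) := by rw [hn']; exact hL0 g
      have e1 : (n:ℝ) ≤ 1 := by rw [hn']; exact hL1 g
      have f0 : (0:ℤ) ≤ n := by exact_mod_cast e0
      have f1 : n ≤ (1:ℤ) := by exact_mod_cast e1
      omega
    choose D hD01 hDL using hDex
    have hf : ∀ g h : G, fc c g h = D g + D h - D (g*h) := by
      intro g h
      have h2 : rotTilde c (liftMul c (g,0) (h,0)) - rotTilde c (g,0) -
          rotTilde c (h,0) = 0 := (H g h).2
      rw [show liftMul c (g,0) (h,0) = (g*h, fc c g h) from by simp [liftMul]] at h2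
      rw [hrot, hrot, hrot] at h2
      rw [← hDL g, ← hDL h, ← hDL (g*h)] at h2
      have h3 : ((fc c g h : ℤ) : ℝ) = ((D g + D h - D (g*h) : ℤ) : ℝ) := by
        push_cast at h2 ⊢
        linarith
      exact_mod_cast h3
    have hD1 : D 1 = 0 := by
      have := hf 1 1
      rw [fc_one_left, one_mul] at this
      omega
    have hsum : ∀ g : G, g ≠ 1 → D g + D g⁻¹ = 1 := by
      intro g hg
      have h1 := hf g g⁻¹
      rw [fc_inv hc hg, mul_inv_cancel, hD1] at h1
      omega
    obtain ⟨h1, h2⟩ := circ_eq_of_cobound hc D hD01 hD1 hsum hf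
    exact ⟨_, h1, h2⟩


end Paper
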